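/- For z ∈ 𝔻 define P(z) = 3/(1−z) − z̄/(1−|z|²). Then sup_{z∈𝔻}(1−|z|²)|P(z)| = 5. -/

import Mathlib

open Complex Metric Set

def unitDisk : Set ℂ := Metric.ball 0 1

/-- For `P(z) = 3/(1−z) − conj z/(1−|z|²)`, one has `sup (1−|z|²)|P(z)| = 5`. -/
theorem preSchwarzian_norm_eq_five' :
    sSup {r | ∃ z ∈ unitDisk,
        r = (1 - ‖z‖ ^ 2) *
          ‖3 / (1 - z) - (starRingEnd ℂ) z / ((1 - ‖z‖ ^ 2 : ℝ) : ℂ)‖} = 5 := by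
  set S := {r | ∃ z ∈ unitDisk,
        r = (1 - ‖z‖ ^ 2) *
          ‖3 / (1 - z) - (starRingEnd ℂ) z / ((1 - ‖z‖ ^ 2 : ℝ) : ℂ)‖} with hS
  have hub : ∀ r ∈ S, r ≤ 5 := by
    rintro r ⟨z, hz, rfl⟩
    have hz1 : ‖z‖ < 1 := by simpa [unitDisk] using hz
    have hzn : (0:ℝ) ≤ ‖z‖ := norm_nonneg z
    have hs : (0:ℝ) < 1 - ‖z‖^2 := by nlinarith
    have hs' : ((1 - ‖z‖^2 : ℝ):ℂ) ≠ 0 := by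
      exact_mod_cast (ne_of_gt hs)
    have hz1c : (1:ℂ) - z ≠ 0 := by
      intro h
      have hz1e : z = 1 := (sub_eq_zero.mp h).symm
      rw [hz1e] at hz1
      simp at hz1
    have hzz : (starRingEnd ℂ) z * z = ((‖z‖^2 : ℝ):ℂ) := by
      rw [mul_comm, Complex.mul_conj, Complex.normSq_eq_norm_sq]
    have e2 : (3:ℂ)*((1 - ‖z‖^2 : ℝ):ℂ) - (1-z) * (starRingEnd ℂ) z
        = ((3 - 2*‖z‖^2 :ℝ):ℂ) - (starRingEnd ℂ) z := by
      push_cast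
      push_cast at hzz
      linear_combination hzz
    have key : ((1 - ‖z‖^2 : ℝ):ℂ) * (3/(1-z) - (starRingEnd ℂ) z/((1-‖z‖^2:ℝ):ℂ))
        = (((3 - 2*‖z‖^2 :ℝ):ℂ) - (starRingEnd ℂ) z)/(1-z) := by
      rw [div_sub_div _ _ hz1c hs', e2, mul_comm ((1:ℂ)-z) _, ← div_div,
        mul_div_assoc']
      rw [eq_div_iff hz1c]
      have hsc := hs'
      push_cast at hsc
      rw [div_mul_cancel₀ _ hz1c, mul_comm, div_mul_cancel₀ _ hs']
    set w := ((3 - 2*‖z‖^2 :ℝ):ℂ) - (starRingEnd ℂ) z with hw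
    have hsz : ‖z‖^2 = z.re^2 + z.im^2 := by
      rw [Complex.sq_norm, Complex.normSq_apply]; ring
    have habs : z.re^2 + z.im^2 < 1 := by rw [← hsz]; nlinarith
    have hwre : w.re = 3 - 2*‖z‖^2 - z.re := by
      simp only [hw, Complex.sub_re, Complex.ofReal_re, Complex.conj_re]
    have hwim : w.im = z.im := by
      simp only [hw, Complex.sub_im, Complex.ofReal_im, Complex.conj_im]
      ring
    have hw2 : ‖w‖^2 = w.re^2 + w.im^2 := by
      rw [Complex.sq_norm, Complex.normSq_apply]; ring
    have hv2 : ‖(1:ℂ) - z‖^2 = (1 - z.re)^2 + z.im^2 := by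
      rw [Complex.sq_norm, Complex.normSq_apply]
      simp [Complex.sub_re, Complex.sub_im]
      ring
    have hnormw : ‖w‖ ≤ 5 * ‖(1:ℂ) - z‖ := by
      have hsq : ‖w‖^2 ≤ 25 * ‖(1:ℂ) - z‖^2 := by
        rw [hw2, hv2, hwre, hwim, hsz]
        nlinarith [sq_nonneg (1 - z.re), sq_nonneg z.im,
          sq_nonneg (3 - 2*(z.re^2 + z.im^2) - z.re)]
      nlinarith [norm_nonneg w, norm_nonneg ((1:ℂ) - z)]
    have hv0 : (0:ℝ) < ‖(1:ℂ) - z‖ := norm_pos_iff.mpr hz1c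
    calc (1 - ‖z‖^2) * ‖3/(1-z) - (starRingEnd ℂ) z/((1-‖z‖^2:ℝ):ℂ)‖
        = ‖((1 - ‖z‖^2 : ℝ):ℂ) * (3/(1-z) - (starRingEnd ℂ) z/((1-‖z‖^2:ℝ):ℂ))‖ := by
          rw [norm_mul, Complex.norm_real, Real.norm_eq_abs, abs_of_pos hs]
      _ = ‖w‖ / ‖(1:ℂ) - z‖ := by rw [key, norm_div]
      _ ≤ 5 := by rw [div_le_iff₀ hv0]; linarith
  have h0 : (3:ℝ) ∈ S := by
    refine ⟨0, ?_, ?_⟩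
    · simp [unitDisk]
    · norm_num
  have hbdd : BddAbove S := ⟨5, hub⟩
  have hmem : ∀ t : ℝ, 0 < t → t < 1 → (3 + 2*t) ∈ S := by
    intro t ht0 ht1
    have ht2 : (0:ℝ) < 1 - t^2 := by nlinarith
    refine ⟨(t:ℂ), ?_, ?_⟩
    · simp only [unitDisk, mem_ball, dist_zero_right, Complex.norm_real,
        Real.norm_eq_abs, abs_of_pos ht0]
      exact ht1
    · have hnt : ‖(t:ℂ)‖ = t := by
        rw [Complex.norm_real, Real.norm_eq_abs, abs_of_pos ht0]
      have h1tc : (1:ℂ) - (t:ℂ) ≠ 0 := by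
        intro h
        have : (1:ℝ) - t = 0 := by exact_mod_cast h
        linarith
      have h1t2c : ((1 - t^2 : ℝ):ℂ) ≠ 0 := by
        exact_mod_cast (ne_of_gt ht2)
      have h1t2c' : (1:ℂ) - (t:ℂ)^2 ≠ 0 := by
        intro h
        have : (1:ℝ) - t^2 = 0 := by exact_mod_cast h
        linarith
      have hval : (3:ℂ)/(1-(t:ℂ)) - (starRingEnd ℂ) (t:ℂ)/((1-‖(t:ℂ)‖^2:ℝ):ℂ)
          = (((3+2*t)/(1-t^2) : ℝ):ℂ) := by
        rw [hnt, Complex.conj_ofReal]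
        push_cast
        field_simp
        ring
      rw [hval, hnt, Complex.norm_real, Real.norm_eq_abs,
        abs_of_pos (div_pos (by linarith) ht2)]
      field_simp
  refine le_antisymm (csSup_le ⟨3, h0⟩ hub) ?_
  by_contra h
  push_neg at h
  have hc3 : (3:ℝ) ≤ sSup S := le_csSup hbdd h0
  have ht0 : 0 < (sSup S - 1)/4 := by linarith
  have ht1 : (sSup S - 1)/4 < 1 := by linarith
  have hle : 3 + 2*((sSup S - 1)/4) ≤ sSup S := le_csSup hbdd (hmem _ ht0 ht1)
  linarith
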